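/- Let A be a unital Pro-C*-algebra, S ⊆ A a local operator system, and φ : S → M_n(ℂ) a local completely positive map. Then there exists a local completely positive map ψ : A → M_n(ℂ) extending φ (a local Arveson extension theorem for matrix-valued maps). -/

import Mathlib

open scoped ComplexOrder

noncomputable section

variable {V : Type} [AddCommGroup V] [Module ℂ V]

/-- Conjugation `Xᴴ A X` of a `V`-valued matrix by a scalar matrix `X`. -/
def sconj {n m : ℕ} (X : Matrix (Fin n) (Fin m) ℂ)
    (A : Matrix (Fin n) (Fin n) V) : Matrix (Fin m) (Fin m) V :=
  Matrix.of fun i j => ∑ p, ∑ q, ((starRingEnd ℂ) (X p i) * X q j) • A p q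

/-- A (not necessarily proper) cone in a complex vector space. -/
def IsVCone {M : Type} [AddCommGroup M] [Module ℂ M] (C : Set M) : Prop :=
  (0 : M) ∈ C ∧ (∀ x ∈ C, ∀ y ∈ C, x + y ∈ C) ∧
    ∀ r : ℝ, 0 ≤ r → ∀ x ∈ C, (r : ℂ) • x ∈ C

/-- A 2×2 block matrix of `n × n` blocks, reindexed to `Fin (n+n)`. -/
def blk {n : ℕ} (A B C D : Matrix (Fin n) (Fin n) V) :
    Matrix (Fin (n + n)) (Fin (n + n)) V :=
  Matrix.reindex finSumFinEquiv finSumFinEquiv (Matrix.fromBlocks A B C D)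

/-- The diagonal matrix `diag (e, …, e)`. -/
def diagE (e : V) (n : ℕ) : Matrix (Fin n) (Fin n) V :=
  Matrix.diagonal fun _ => e

variable [StarAddMonoid V] [StarModule ℂ V]

/-- The seminorm at level `(α, n)` induced by the matrix cones `C` and the unit `e`:
`‖X‖_α^n = inf { r ≥ 0 : [[r eₙ, X],[X*, r eₙ]] ∈ C_α^{2n} }`. -/
def nrm {Γ : Type} (C : Γ → (k : ℕ) → Set (Matrix (Fin k) (Fin k) V)) (e : V)
    (α : Γ) (n : ℕ) (X : Matrix (Fin n) (Fin n) V) : ℝ :=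
  sInf {r : ℝ | 0 ≤ r ∧
    blk ((r : ℂ) • diagE e n) X (star X) ((r : ℂ) • diagE e n) ∈ C α (n + n)}

/-- A local matrix *-ordering on `V`: a downward filtered family of compatible matrix
cones of hermitian matrices whose total intersection with their negatives is trivial. -/
structure LMOrder (Γ : Type) (V : Type) [AddCommGroup V] [Module ℂ V]
    [StarAddMonoid V] [StarModule ℂ V] where
  C : Γ → (n : ℕ) → Set (Matrix (Fin n) (Fin n) V)
  cone : ∀ α n, IsVCone (C α n)
  herm : ∀ α n, ∀ A ∈ C α n, star A = A
  filtered : ∀ α β : Γ, ∃ γ, ∀ n, C γ n ⊆ C α n ∩ C β n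
  proper : ∀ n (A : Matrix (Fin n) (Fin n) V), (∀ α, A ∈ C α n ∧ -A ∈ C α n) → A = 0
  compat : ∀ (α : Γ) (n m : ℕ) (X : Matrix (Fin n) (Fin m) ℂ),
    ∀ A ∈ C α n, sconj X A ∈ C α m

/-- An abstract local operator system: a local matrix *-ordering together with an
Archimedean matrix order unit. -/
structure LocalOpSys (Γ : Type) (V : Type) [AddCommGroup V] [Module ℂ V]
    [StarAddMonoid V] [StarModule ℂ V] extends LMOrder Γ V where
  e : V
  eherm : star e = e
  unit : ∀ (α : Γ) (n : ℕ) (A : Matrix (Fin n) (Fin n) V), star A = A →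
    ∃ r : ℝ, 0 < r ∧ (r : ℂ) • diagE e n - A ∈ C α n
  arch : ∀ (α : Γ) (n : ℕ) (A : Matrix (Fin n) (Fin n) V),
    (∀ r : ℝ, 0 < r → (r : ℂ) • diagE e n + A ∈ C α n) → A ∈ C α n

/-- An Archimedean local order unit space (`A.L.O.U.` space): ground-level cones only. -/
structure ALOU (Γ : Type) (V : Type) [AddCommGroup V] [Module ℂ V]
    [StarAddMonoid V] [StarModule ℂ V] where
  pos : Γ → Set V
  cone : ∀ α, IsVCone (pos α)
  herm : ∀ α, ∀ v ∈ pos α, star v = v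
  filtered : ∀ α β : Γ, ∃ γ, pos γ ⊆ pos α ∩ pos β
  proper : ∀ v : V, (∀ α, v ∈ pos α ∧ -v ∈ pos α) → v = 0
  e : V
  eherm : star e = e
  unit : ∀ (α : Γ) (v : V), star v = v → ∃ r : ℝ, 0 < r ∧ (r : ℂ) • e - v ∈ pos α
  arch : ∀ (α : Γ) (v : V), (∀ r : ℝ, 0 < r → (r : ℂ) • e + v ∈ pos α) → v ∈ pos α

/-- The minimal matrix cones over a family of ground-level cones. -/
def Cmin {Γ : Type} (pos : Γ → Set V) (α : Γ) (n : ℕ) :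
    Set (Matrix (Fin n) (Fin n) V) :=
  {A | ∀ L : Fin n → ℂ, (∑ i, ∑ j, ((starRingEnd ℂ) (L i) * L j) • A i j) ∈ pos α}

/-- The maximal matrix cones over a family of ground-level cones:
sums `Σ aᵢ ⊗ vᵢ` with `aᵢ` positive semidefinite scalar matrices and `vᵢ` positive. -/
def Dmax {Γ : Type} (pos : Γ → Set V) (α : Γ) (n : ℕ) :
    Set (Matrix (Fin n) (Fin n) V) :=
  {A | ∃ (k : ℕ) (a : Fin k → Matrix (Fin n) (Fin n) ℂ) (v : Fin k → V),
    (∀ i, (a i).PosSemidef) ∧ (∀ i, v i ∈ pos α) ∧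
    A = Matrix.of fun p q => ∑ i, (a i p q) • v i}

/-- The amplification `φ⁽ᵏ⁾` of a matrix-valued linear map, realized on the index
type `Fin k × ι`. -/
def ampP {S : Type} [AddCommGroup S] [Module ℂ S] {k : ℕ} {ι : Type} [Fintype ι]
    (φ : S →ₗ[ℂ] Matrix ι ι ℂ) (M : Matrix (Fin k) (Fin k) S) :
    Matrix (Fin k × ι) (Fin k × ι) ℂ :=
  Matrix.of fun ip jq => φ (M ip.1 jq.1) ip.2 jq.2

end

namespace St15
set_option linter.unusedSectionVars false

open scoped ComplexOrder

noncomputable section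

variable {A : Type} [Ring A] [Algebra ℂ A] [StarRing A] [StarModule ℂ A]

/-- single-entry matrix -/
def sbm {n : ℕ} (p q : Fin n) (a : A) : Matrix (Fin n) (Fin n) A :=
  Matrix.of fun i j => if i = p ∧ j = q then a else 0

lemma sbm_add {n : ℕ} (p q : Fin n) (a b : A) :
    sbm p q (a + b) = sbm p q a + sbm p q b := by
  ext i j
  simp only [sbm, Matrix.of_apply, Matrix.add_apply]
  split_ifs <;> simp

lemma sbm_smul {n : ℕ} (p q : Fin n) (c : ℂ) (a : A) :
    sbm p q (c • a) = c • sbm p q a := by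
  ext i j
  simp only [sbm, Matrix.of_apply, Matrix.smul_apply]
  split_ifs <;> simp

lemma sbm_star {n : ℕ} (p q : Fin n) (a : A) :
    star (sbm p q a) = sbm q p (star a) := by
  ext i j
  simp only [Matrix.star_apply, sbm, Matrix.of_apply]
  by_cases h1 : i = q <;> by_cases h2 : j = p <;> simp [h1, h2]

lemma g_csmul {n : ℕ} (g : Matrix (Fin n) (Fin n) A →ₗ[ℝ] ℝ) (c : ℂ)
    (M : Matrix (Fin n) (Fin n) A) :
    g (c • M) = c.re * g M + c.im * g (Complex.I • M) := by
  have h1 : c • M = (c.re : ℝ) • M + (c.im : ℝ) • (Complex.I • M) := by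
    rw [← Complex.coe_smul, ← Complex.coe_smul, smul_smul, ← add_smul]
    congr 1
    simp [Complex.ext_iff]
  rw [h1, map_add, map_smul, map_smul, smul_eq_mul, smul_eq_mul]

/-- complexification of a real functional -/
def FL {n : ℕ} (g : Matrix (Fin n) (Fin n) A →ₗ[ℝ] ℝ) :
    Matrix (Fin n) (Fin n) A →ₗ[ℂ] ℂ where
  toFun M := (g M : ℂ) - Complex.I * (g (Complex.I • M) : ℂ)
  map_add' M N := by
    rw [smul_add, map_add, map_add]
    push_cast
    ring
  map_smul' c M := by
    have h2 : Complex.I • (c • M) = (Complex.I * c) • M := smul_smul _ _ _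
    rw [RingHom.id_apply, smul_eq_mul, h2, g_csmul, g_csmul g (Complex.I * c)]
    apply Complex.ext <;>
      simp [Complex.mul_re, Complex.mul_im] <;> ring

lemma FL_apply {n : ℕ} (g : Matrix (Fin n) (Fin n) A →ₗ[ℝ] ℝ)
    (M : Matrix (Fin n) (Fin n) A) :
    FL g M = (g M : ℂ) - Complex.I * (g (Complex.I • M) : ℂ) := rfl

lemma g_star {n : ℕ} (g : Matrix (Fin n) (Fin n) A →ₗ[ℝ] ℝ)
    (hg0 : ∀ M, M + star M = 0 → g M = 0) (M : Matrix (Fin n) (Fin n) A) :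
    g (star M) = g M := by
  have h := hg0 (star M - M) (by rw [star_sub, star_star]; abel)
  rw [map_sub] at h
  linarith

lemma g_Istar {n : ℕ} (g : Matrix (Fin n) (Fin n) A →ₗ[ℝ] ℝ)
    (hg0 : ∀ M, M + star M = 0 → g M = 0) (M : Matrix (Fin n) (Fin n) A) :
    g (Complex.I • star M) = - g (Complex.I • M) := by
  have h := hg0 (Complex.I • star M + Complex.I • M) (by
    rw [star_add, star_smul, star_smul, star_star]
    simp only [RCLike.star_def, Complex.conj_I, neg_smul]
    abel)
  rw [map_add] at h
  linarith

lemma FL_star {n : ℕ} (g : Matrix (Fin n) (Fin n) A →ₗ[ℝ] ℝ)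
    (hg0 : ∀ M, M + star M = 0 → g M = 0) (M : Matrix (Fin n) (Fin n) A) :
    FL g (star M) = (starRingEnd ℂ) (FL g M) := by
  rw [FL_apply, FL_apply, g_star g hg0, g_Istar g hg0]
  apply Complex.ext <;> simp

lemma FL_herm {n : ℕ} (g : Matrix (Fin n) (Fin n) A →ₗ[ℝ] ℝ)
    (hg0 : ∀ M, M + star M = 0 → g M = 0) (M : Matrix (Fin n) (Fin n) A)
    (hM : star M = M) : FL g M = (g M : ℂ) := by
  have h : g (Complex.I • M) = 0 := hg0 _ (by
    rw [star_smul, hM]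
    simp only [RCLike.star_def, Complex.conj_I, neg_smul]
    abel)
  rw [FL_apply, h]
  simp

/-- the associated functional on matrices with entries in S -/
def Phi {n : ℕ} {S : Submodule ℂ A} (φ : ↥S →ₗ[ℂ] Matrix (Fin n) (Fin n) ℂ)
    (M : Matrix (Fin n) (Fin n) A) (h : ∀ i j, M i j ∈ S) : ℂ :=
  ∑ i, ∑ j, φ ⟨M i j, h i j⟩ i j

lemma Phi_add {n : ℕ} {S : Submodule ℂ A} (φ : ↥S →ₗ[ℂ] Matrix (Fin n) (Fin n) ℂ)
    {X Y : Matrix (Fin n) (Fin n) A}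
    (hX : ∀ i j, X i j ∈ S) (hY : ∀ i j, Y i j ∈ S) (hXY : ∀ i j, (X + Y) i j ∈ S) :
    Phi φ (X + Y) hXY = Phi φ X hX + Phi φ Y hY := by
  unfold Phi
  rw [← Finset.sum_add_distrib]
  refine Finset.sum_congr rfl fun i _ => ?_
  rw [← Finset.sum_add_distrib]
  refine Finset.sum_congr rfl fun j _ => ?_
  have h : (⟨(X + Y) i j, hXY i j⟩ : ↥S) = ⟨X i j, hX i j⟩ + ⟨Y i j, hY i j⟩ := rfl
  rw [h, map_add, Matrix.add_apply]

lemma Phi_smul {n : ℕ} {S : Submodule ℂ A} (φ : ↥S →ₗ[ℂ] Matrix (Fin n) (Fin n) ℂ)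
    (c : ℂ) {X : Matrix (Fin n) (Fin n) A}
    (hX : ∀ i j, X i j ∈ S) (hcX : ∀ i j, (c • X) i j ∈ S) :
    Phi φ (c • X) hcX = c * Phi φ X hX := by
  unfold Phi
  rw [Finset.mul_sum]
  refine Finset.sum_congr rfl fun i _ => ?_
  rw [Finset.mul_sum]
  refine Finset.sum_congr rfl fun j _ => ?_
  have h : (⟨(c • X) i j, hcX i j⟩ : ↥S) = c • ⟨X i j, hX i j⟩ := rfl
  rw [h, map_smul, Matrix.smul_apply, smul_eq_mul]

lemma Phi_congr {n : ℕ} {S : Submodule ℂ A} (φ : ↥S →ₗ[ℂ] Matrix (Fin n) (Fin n) ℂ)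
    {X Y : Matrix (Fin n) (Fin n) A} (hXY : X = Y)
    (hX : ∀ i j, X i j ∈ S) (hY : ∀ i j, Y i j ∈ S) :
    Phi φ X hX = Phi φ Y hY := by
  subst hXY; rfl

lemma Phi_sbm {n : ℕ} {S : Submodule ℂ A} (φ : ↥S →ₗ[ℂ] Matrix (Fin n) (Fin n) ℂ)
    (p q : Fin n) (s : ↥S) (h : ∀ i j, sbm p q (s : A) i j ∈ S) :
    Phi φ (sbm p q (s : A)) h = φ s p q := by
  unfold Phi
  have he : ∀ i j, (⟨sbm p q (s : A) i j, h i j⟩ : ↥S)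
      = if i = p ∧ j = q then s else 0 := by
    intro i j
    apply Subtype.ext
    simp only [sbm, Matrix.of_apply]
    split_ifs <;> rfl
  calc (∑ i, ∑ j, φ ⟨sbm p q (s : A) i j, h i j⟩ i j)
      = ∑ i, ∑ j, (if i = p ∧ j = q then φ s i j else 0) := by
        refine Finset.sum_congr rfl fun i _ => Finset.sum_congr rfl fun j _ => ?_
        rw [he i j]
        split_ifs <;> simp
    _ = φ s p q := by simp [ite_and, Finset.sum_ite_eq]

lemma quad_expand {m : Type} [Fintype m] (P : Matrix m m ℂ) (x : m → ℂ) :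
    dotProduct (star x) (P.mulVec x)
      = ∑ i, ∑ j, (starRingEnd ℂ) (x i) * x j * P i j := by
  simp only [dotProduct, Matrix.mulVec, Pi.star_apply, Finset.mul_sum,
    Complex.star_def]
  refine Finset.sum_congr rfl fun i _ => Finset.sum_congr rfl fun j _ => ?_
  ring

lemma diag_collapse {n : ℕ} (f : Fin n × Fin n → ℂ) :
    (∑ ip : Fin n × Fin n, (if ip.1 = ip.2 then (1:ℂ) else 0) * f ip)
      = ∑ i, f (i, i) := by
  rw [Fintype.sum_prod_type]
  simp [ite_mul, Finset.sum_ite_eq]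

lemma Phi_pos {n : ℕ} {S : Submodule ℂ A} (φ : ↥S →ₗ[ℂ] Matrix (Fin n) (Fin n) ℂ)
    {Mb : Matrix (Fin n) (Fin n) A} (h : ∀ i j, Mb i j ∈ S)
    (hPSD : (ampP φ (Matrix.of fun i j => (⟨Mb i j, h i j⟩ : ↥S))).PosSemidef) :
    0 ≤ Phi φ Mb h := by
  set xv : Fin n × Fin n → ℂ := fun ip => if ip.1 = ip.2 then (1:ℂ) else 0 with hxv
  set P := ampP φ (Matrix.of fun i j => (⟨Mb i j, h i j⟩ : ↥S)) with hP
  have h2 := hPSD.dotProduct_mulVec_nonneg xv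
  rw [quad_expand] at h2
  refine le_of_le_of_eq h2 ?_
  have hconj : ∀ ip : Fin n × Fin n, (starRingEnd ℂ) (xv ip) = xv ip := by
    intro ip; rw [hxv]; dsimp only; split_ifs <;> simp
  calc (∑ ip, ∑ jq, (starRingEnd ℂ) (xv ip) * xv jq * P ip jq)
      = ∑ ip, xv ip * ∑ jq, xv jq * P ip jq := by
        refine Finset.sum_congr rfl fun ip _ => ?_
        rw [hconj, Finset.mul_sum]
        refine Finset.sum_congr rfl fun jq _ => ?_
        ring
    _ = ∑ i, ∑ jq, xv jq * P (i, i) jq := diag_collapse _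
    _ = ∑ i, ∑ j, P (i, i) (j, j) := Finset.sum_congr rfl fun i _ => diag_collapse _
    _ = Phi φ Mb h := rfl

lemma sum_guard {β : Type} [AddCommMonoid β] {m : ℕ} (P : Prop) [Decidable P]
    (h : Fin m → β) :
    (∑ j, if P then h j else 0) = if P then ∑ j, h j else 0 := by
  split_ifs <;> simp

lemma sum_ite_guard {β : Type} [AddCommMonoid β] {m : ℕ} (P : Prop) [Decidable P]
    (v : Fin m) (f : Fin m → β) :
    (∑ q, if P then (if v = q then f q else 0) else 0) = if P then f v else 0 := by
  split_ifs <;> simp [Finset.sum_ite_eq]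

lemma sconj_decomp {k n : ℕ} (M : Matrix (Fin k) (Fin k) A) (x : Fin k × Fin n → ℂ) :
    sconj (Matrix.of fun i p => x (i, p)) M
      = ∑ ip : Fin k × Fin n, ∑ jq : Fin k × Fin n,
          ((starRingEnd ℂ) (x ip) * x jq) • sbm ip.2 jq.2 (M ip.1 jq.1) := by
  ext u v
  simp only [sconj, Matrix.of_apply, Matrix.sum_apply, Matrix.smul_apply, sbm]
  have hterm : ∀ (i : Fin k) (p : Fin n) (j : Fin k) (q : Fin n),
      ((starRingEnd ℂ) (x (i, p)) * x (j, q)) • (if u = p ∧ v = q then M i j else 0)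
        = if u = p then (if v = q then
            ((starRingEnd ℂ) (x (i, p)) * x (j, q)) • M i j else 0) else 0 := by
    intro i p j q; by_cases h1 : u = p <;> by_cases h2 : v = q <;> simp [h1, h2]
  simp only [Fintype.sum_prod_type, hterm, sum_ite_guard, sum_guard,
    Finset.sum_ite_eq, Finset.mem_univ, if_true]

/-- the extension map -/
def psi {n : ℕ} (g : Matrix (Fin n) (Fin n) A →ₗ[ℝ] ℝ) :
    A →ₗ[ℂ] Matrix (Fin n) (Fin n) ℂ where
  toFun a := Matrix.of fun p q => FL g (sbm p q a)
  map_add' a b := by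
    ext p q
    simp [sbm_add, map_add]
  map_smul' c a := by
    ext p q
    simp [sbm_smul, map_smul]

lemma psi_apply {n : ℕ} (g : Matrix (Fin n) (Fin n) A →ₗ[ℝ] ℝ) (a : A) (p q : Fin n) :
    psi g a p q = FL g (sbm p q a) := rfl

lemma quad_main {k n : ℕ} (g : Matrix (Fin n) (Fin n) A →ₗ[ℝ] ℝ)
    (M : Matrix (Fin k) (Fin k) A) (x : Fin k × Fin n → ℂ) :
    dotProduct (star x) ((ampP (psi g) M).mulVec x)
      = FL g (sconj (Matrix.of fun i p => x (i, p)) M) := by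
  rw [quad_expand, sconj_decomp, map_sum]
  refine Finset.sum_congr rfl fun ip _ => ?_
  rw [map_sum]
  refine Finset.sum_congr rfl fun jq _ => ?_
  rw [map_smul, smul_eq_mul]
  have h : (ampP (psi g) M) ip jq = FL g (sbm ip.2 jq.2 (M ip.1 jq.1)) := rfl
  rw [h, mul_assoc]

end

end St15

/-- local Arveson extension for matrix-valued maps: a local completely
positive map `φ : S → M_n(ℂ)` on a local operator system inside a unital
Pro-C*-algebra `A` extends to a local completely positive map on all of `A`. -/
theorem statement15 {Γ A : Type} [Ring A] [Algebra ℂ A] [StarRing A] [StarModule ℂ A]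
    (T : LocalOpSys Γ A) (hTe : T.e = 1)
    (S : Submodule ℂ A) (h1 : (1 : A) ∈ S) (hstar : ∀ a ∈ S, star a ∈ S)
    (n : ℕ) (φ : S →ₗ[ℂ] Matrix (Fin n) (Fin n) ℂ)
    (hφ : ∃ α : Γ, ∀ (k : ℕ) (M : Matrix (Fin k) (Fin k) S),
      (M.map fun s => (s : A)) ∈ T.C α k → (ampP φ M).PosSemidef) :
    ∃ ψ : A →ₗ[ℂ] Matrix (Fin n) (Fin n) ℂ,
      (∀ s : S, ψ s = φ s) ∧
      ∃ α : Γ, ∀ (k : ℕ) (M : Matrix (Fin k) (Fin k) A),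
        M ∈ T.C α k → (ampP ψ M).PosSemidef := by

  classical
  obtain ⟨α, hα⟩ := hφ
  have cone := T.cone α n
  set E : Matrix (Fin n) (Fin n) A := diagE (1 : A) n with hEdef
  have hEentry : ∀ i j, E i j ∈ S := by
    intro i j
    by_cases h : i = j <;>
      simp [hEdef, diagE, Matrix.diagonal_apply, h, h1, S.zero_mem]
  have hEstar : star E = E := by
    ext i j
    rw [hEdef]
    unfold diagE
    rw [Matrix.star_apply, Matrix.diagonal_apply, Matrix.diagonal_apply]
    by_cases h : i = j
    · subst h; simp
    · rw [if_neg h, if_neg (fun hh => h hh.symm), star_zero]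
  -- E is in the cone
  have hEK : E ∈ T.C α n := by
    obtain ⟨r, hr, hK⟩ := T.unit α n (-E) (by rw [star_neg, hEstar])
    rw [hTe, sub_neg_eq_add] at hK
    have h2 : ((1 / (r + 1) : ℝ) : ℂ) • ((r : ℂ) • diagE (1 : A) n + diagE (1 : A) n)
        = E := by
      have h3 : (r : ℂ) • diagE (1 : A) n + diagE (1 : A) n
          = ((r + 1 : ℝ) : ℂ) • diagE (1 : A) n := by
        push_cast
        rw [add_smul, one_smul]
      rw [h3, smul_smul, ← Complex.ofReal_mul, one_div, inv_mul_cancel₀ (by linarith),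
        Complex.ofReal_one, one_smul, hEdef]
    rw [← h2]
    exact cone.2.2 _ (by positivity) _ hK
  -- positivity of Phi on the cone
  have posK : ∀ (Mb : Matrix (Fin n) (Fin n) A) (h : ∀ i j, Mb i j ∈ S),
      Mb ∈ T.C α n → 0 ≤ St15.Phi φ Mb h := by
    intro Mb h hK
    apply St15.Phi_pos
    apply hα
    have he : (Matrix.of fun i j => (⟨Mb i j, h i j⟩ : ↥S)).map (fun s => (s : A))
        = Mb := by
      ext i j; rfl
    rw [he]
    exact hK
  -- Phi is real on hermitian elements
  have realHerm : ∀ (X : Matrix (Fin n) (Fin n) A) (h : ∀ i j, X i j ∈ S),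
      star X = X → (St15.Phi φ X h).im = 0 := by
    intro X h hX
    obtain ⟨r, hr, hK⟩ := T.unit α n X hX
    rw [hTe] at hK
    have hrE : ∀ i j, ((r : ℂ) • E) i j ∈ S := fun i j => by
      rw [Matrix.smul_apply]; exact S.smul_mem _ (hEentry i j)
    have hsub : ∀ i j, ((r : ℂ) • E - X) i j ∈ S := fun i j => by
      rw [Matrix.sub_apply]; exact S.sub_mem (hrE i j) (h i j)
    have p1 := posK _ hsub hK
    have p0 := posK _ hEentry hEK
    have hady : ∀ i j, (((r : ℂ) • E - X) + X) i j ∈ S := fun i j => by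
      rw [Matrix.add_apply]; exact S.add_mem (hsub i j) (h i j)
    have hsplit : St15.Phi φ ((r : ℂ) • E) hrE
        = St15.Phi φ ((r : ℂ) • E - X) hsub + St15.Phi φ X h := by
      rw [← St15.Phi_add φ hsub h hady]
      exact St15.Phi_congr φ (by abel) hrE hady
    have hscal : St15.Phi φ ((r : ℂ) • E) hrE
        = (r : ℂ) * St15.Phi φ E hEentry := St15.Phi_smul φ _ hEentry hrE
    have e0 : (St15.Phi φ E hEentry).im = 0 := ((Complex.nonneg_iff).1 p0).2.symm
    have e1 : (St15.Phi φ ((r : ℂ) • E - X) hsub).im = 0 :=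
      ((Complex.nonneg_iff).1 p1).2.symm
    have him := congrArg Complex.im hsplit
    rw [hscal] at him
    simp only [Complex.add_im, Complex.mul_im, Complex.ofReal_re, Complex.ofReal_im,
      e0, e1, mul_zero, zero_mul, add_zero, zero_add] at him
    linarith [him]
  -- Phi is star-compatible
  have conjPhi : ∀ (M : Matrix (Fin n) (Fin n) A) (h : ∀ i j, M i j ∈ S)
      (h' : ∀ i j, star M i j ∈ S),
      St15.Phi φ (star M) h' = (starRingEnd ℂ) (St15.Phi φ M h) := by
    intro M h h'
    have hadd : ∀ i j, (M + star M) i j ∈ S := fun i j => by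
      rw [Matrix.add_apply]; exact S.add_mem (h i j) (h' i j)
    have r1 := realHerm (M + star M) hadd (by rw [star_add, star_star, add_comm])
    rw [St15.Phi_add φ h h' hadd] at r1
    have hIM : ∀ i j, (Complex.I • M) i j ∈ S := fun i j => by
      rw [Matrix.smul_apply]; exact S.smul_mem _ (h i j)
    have hfix : star (Complex.I • M) = (-Complex.I) • star M := by
      rw [star_smul]
      simp [RCLike.star_def, Complex.conj_I]
    have hIsM' : ∀ i j, ((-Complex.I) • star M) i j ∈ S := fun i j => by
      rw [Matrix.smul_apply]; exact S.smul_mem _ (h' i j)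
    have hIsM : ∀ i j, star (Complex.I • M) i j ∈ S := fun i j => by
      rw [hfix]; exact hIsM' i j
    have hsum2 : ∀ i j, (Complex.I • M + star (Complex.I • M)) i j ∈ S := fun i j => by
      rw [Matrix.add_apply]; exact S.add_mem (hIM i j) (hIsM i j)
    have r2 := realHerm _ hsum2 (by rw [star_add, star_star, add_comm])
    rw [St15.Phi_add φ hIM hIsM hsum2, St15.Phi_smul φ Complex.I h hIM,
      St15.Phi_congr φ hfix hIsM hIsM', St15.Phi_smul φ (-Complex.I) h' hIsM'] at r2
    set a := St15.Phi φ M h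
    set b := St15.Phi φ (star M) h'
    simp only [Complex.add_im, Complex.mul_im, Complex.I_re, Complex.I_im,
      Complex.neg_re, Complex.neg_im, one_mul, zero_mul, add_zero, zero_add,
      neg_mul, neg_zero, neg_neg] at r1 r2
    apply Complex.ext
    · simp only [Complex.conj_re]; linarith [r2]
    · simp only [Complex.conj_im]; linarith [r1]
  -- the convex cone for the Riesz extension
  let sC : ConvexCone ℝ (Matrix (Fin n) (Fin n) A) :=
    { carrier := {M | M + star M ∈ T.C α n}
      smul_mem' := by
        intro c hc M hM
        have he : c • M + star (c • M) = (c : ℂ) • (M + star M) := by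
          have h1' : c • M = (c : ℂ) • M := rfl
          have h2' : star ((c : ℂ) • M) = (c : ℂ) • star M := by
            rw [star_smul, RCLike.star_def, Complex.conj_ofReal]
          rw [h1', h2', smul_add]
        show c • M + star (c • M) ∈ T.C α n
        rw [he]
        exact cone.2.2 c hc.le _ hM
      add_mem' := by
        intro M hM N hN
        have he : (M + N) + star (M + N) = (M + star M) + (N + star N) := by
          rw [star_add]; abel
        show (M + N) + star (M + N) ∈ T.C α n
        rw [he]
        exact cone.2.1 _ hM _ hN }
  -- the domain submodule
  let SM : Submodule ℂ (Matrix (Fin n) (Fin n) A) :=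
    { carrier := {M | ∀ i j, M i j ∈ S}
      add_mem' := fun hX hY i j => by
        rw [Matrix.add_apply]; exact S.add_mem (hX i j) (hY i j)
      zero_mem' := fun i j => by rw [Matrix.zero_apply]; exact S.zero_mem
      smul_mem' := fun c M hM i j => by
        rw [Matrix.smul_apply]; exact S.smul_mem c (hM i j) }
  have memSM : ∀ {M : Matrix (Fin n) (Fin n) A},
      M ∈ SM.restrictScalars ℝ → ∀ i j, M i j ∈ S := fun h => h
  -- the partial linear functional
  let fpm : (Matrix (Fin n) (Fin n) A) →ₗ.[ℝ] ℝ :=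
    { domain := SM.restrictScalars ℝ
      toFun :=
      { toFun := fun x => (St15.Phi φ x.1 (memSM x.2)).re
        map_add' := by
          intro x y
          have h := St15.Phi_add φ (memSM x.2) (memSM y.2)
            (fun i j => by rw [Matrix.add_apply];
                           exact S.add_mem (memSM x.2 i j) (memSM y.2 i j))
          exact (congrArg Complex.re h).trans (Complex.add_re _ _)
        map_smul' := by
          intro c x
          have h := St15.Phi_smul φ (c : ℂ) (memSM x.2)
            (fun i j => by rw [Matrix.smul_apply];
                           exact S.smul_mem _ (memSM x.2 i j))
          exact (congrArg Complex.re h).trans (by simp) } }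
  -- nonnegativity on the cone
  have nonneg : ∀ x : fpm.domain, (x : Matrix (Fin n) (Fin n) A) ∈ sC → 0 ≤ fpm x := by
    intro x hx
    have hM : ∀ i j, (x : Matrix (Fin n) (Fin n) A) i j ∈ S := memSM x.2
    have hsM : ∀ i j, star (x : Matrix (Fin n) (Fin n) A) i j ∈ S := fun i j => by
      rw [Matrix.star_apply]; exact hstar _ (hM j i)
    have hadd : ∀ i j,
        ((x : Matrix (Fin n) (Fin n) A) + star (x : Matrix (Fin n) (Fin n) A)) i j ∈ S :=
      fun i j => by rw [Matrix.add_apply]; exact S.add_mem (hM i j) (hsM i j)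
    have hp := posK _ hadd hx
    rw [St15.Phi_add φ hM hsM hadd, conjPhi _ hM hsM] at hp
    have h2 := (Complex.nonneg_iff.1 hp).1
    simp only [Complex.add_re, Complex.conj_re] at h2
    show 0 ≤ (St15.Phi φ (x : Matrix (Fin n) (Fin n) A) hM).re
    linarith
  -- density
  have dense : ∀ y, ∃ x : fpm.domain, (x : Matrix (Fin n) (Fin n) A) + y ∈ sC := by
    intro y
    obtain ⟨r, hr, hK⟩ := T.unit α n (-(y + star y))
      (by rw [star_neg, star_add, star_star, add_comm])
    rw [hTe, sub_neg_eq_add] at hK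
    have hmem : ((r / 2 : ℝ) : ℂ) • E ∈ SM.restrictScalars ℝ := fun i j => by
      rw [Matrix.smul_apply]; exact S.smul_mem _ (hEentry i j)
    refine ⟨⟨((r / 2 : ℝ) : ℂ) • E, hmem⟩, ?_⟩
    show (((r / 2 : ℝ) : ℂ) • E + y) + star (((r / 2 : ℝ) : ℂ) • E + y) ∈ T.C α n
    have he : (((r / 2 : ℝ) : ℂ) • E + y) + star (((r / 2 : ℝ) : ℂ) • E + y)
        = (r : ℂ) • diagE (1 : A) n + (y + star y) := by
      rw [star_add, star_smul, hEstar, RCLike.star_def, Complex.conj_ofReal, hEdef]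
      have h3 : ((r / 2 : ℝ) : ℂ) • diagE (1 : A) n
            + ((r / 2 : ℝ) : ℂ) • diagE (1 : A) n = (r : ℂ) • diagE (1 : A) n := by
        rw [← add_smul]
        norm_num
      rw [← h3]
      abel
    rw [he]
    exact hK
  -- Riesz extension
  obtain ⟨g, hgf, hgpos⟩ := riesz_extension (sC.toPointedCone (by show (0 : Matrix (Fin n) (Fin n) A) + star 0 ∈ T.C α n; rw [star_zero, add_zero]; exact cone.1)) fpm nonneg dense
  have hgf' : ∀ (M : Matrix (Fin n) (Fin n) A) (hM : ∀ i j, M i j ∈ S),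
      g M = (St15.Phi φ M hM).re := by
    intro M hM
    exact hgf ⟨M, hM⟩
  have hg0 : ∀ M, M + star M = 0 → g M = 0 := by
    intro M hM
    have h1' : M ∈ sC := by
      show M + star M ∈ T.C α n
      rw [hM]; exact cone.1
    have h2' : -M ∈ sC := by
      show -M + star (-M) ∈ T.C α n
      rw [star_neg, ← neg_add, hM, neg_zero]; exact cone.1
    have e1 := hgpos M h1'
    have e2 := hgpos (-M) h2'
    rw [map_neg] at e2
    linarith
  -- FL g agrees with Phi on S-matrices
  have FLPhi : ∀ (M : Matrix (Fin n) (Fin n) A) (h : ∀ i j, M i j ∈ S),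
      St15.FL g M = St15.Phi φ M h := by
    intro M h
    have hIM : ∀ i j, (Complex.I • M) i j ∈ S := fun i j => by
      rw [Matrix.smul_apply]; exact S.smul_mem _ (h i j)
    rw [St15.FL_apply, hgf' M h, hgf' _ hIM, St15.Phi_smul φ Complex.I h hIM]
    apply Complex.ext <;>
      simp [Complex.mul_re, Complex.mul_im]
  refine ⟨St15.psi g, ?_, α, ?_⟩
  · -- extension property
    intro s
    ext p q
    rw [St15.psi_apply]
    have hmem : ∀ i j, St15.sbm p q (s : A) i j ∈ S := by
      intro i j
      unfold St15.sbm
      rw [Matrix.of_apply]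
      split_ifs
      · exact s.2
      · exact S.zero_mem
    rw [FLPhi _ hmem, St15.Phi_sbm φ p q s hmem]
  · -- local complete positivity
    intro k M hM
    have hMh : star M = M := T.herm α k M hM
    refine Matrix.PosSemidef.of_dotProduct_mulVec_nonneg ?_ ?_
    · -- hermitian
      show (ampP (St15.psi g) M).conjTranspose = ampP (St15.psi g) M
      ext ip jq
      rw [Matrix.conjTranspose_apply]
      show star (St15.psi g (M jq.1 ip.1) jq.2 ip.2) = St15.psi g (M ip.1 jq.1) ip.2 jq.2
      rw [St15.psi_apply, St15.psi_apply, RCLike.star_def,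
        ← St15.FL_star g hg0, St15.sbm_star]
      have hM' : star (M jq.1 ip.1) = M ip.1 jq.1 := by
        calc star (M jq.1 ip.1) = (star M) ip.1 jq.1 := (Matrix.star_apply _ _ _).symm
          _ = M ip.1 jq.1 := by rw [hMh]
      rw [hM']
    · intro x
      rw [St15.quad_main g M x]
      have hN : sconj (Matrix.of fun i p => x (i, p)) M ∈ T.C α n :=
        T.compat α k n _ M hM
      have hNh : star (sconj (Matrix.of fun i p => x (i, p)) M)
          = sconj (Matrix.of fun i p => x (i, p)) M := T.herm α n _ hN
      rw [St15.FL_herm g hg0 _ hNh]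
      refine Complex.zero_le_real.2 ?_
      apply hgpos
      show sconj (Matrix.of fun i p => x (i, p)) M
          + star (sconj (Matrix.of fun i p => x (i, p)) M) ∈ T.C α n
      rw [hNh]
      have h2 : sconj (Matrix.of fun i p => x (i, p)) M
          + sconj (Matrix.of fun i p => x (i, p)) M
          = ((2 : ℝ) : ℂ) • sconj (Matrix.of fun i p => x (i, p)) M := by
        push_cast
        rw [two_smul]
      rw [h2]
      exact cone.2.2 2 (by norm_num) _ hN
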